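/- arXiv:1701.03888 — 3 statements merged into one kernel-verified Lean document; each statement's English description precedes it below -/
import Mathlib

section
/- For every natural number N and all real numbers x and Δ, one has the factorization P̃^{(N+1,1/2)}_{N+1}(x) = ((N+1)x + Δ²)·P^{(N,1/2)}_N(x). -/
/-- The constraint polynomials `P^{(N,ε)}_k(x)` of the asymmetric quantum Rabi model,
defined by the recursion `P₀ = 1`, `P₁ = x + Δ² − 1 − 2ε`,
`P_k = (k x + Δ² − k² − 2kε) P_{k−1} − k(k−1)(N−k+1) x P_{k−2}`. -/
noncomputable def constraintP (N : ℕ) (ε Δ x : ℝ) : ℕ → ℝ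
  | 0 => 1
  | 1 => x + Δ ^ 2 - 1 - 2 * ε
  | (k + 2) =>
      (((k : ℝ) + 2) * x + Δ ^ 2 - ((k : ℝ) + 2) ^ 2 - 2 * ((k : ℝ) + 2) * ε) *
          constraintP N ε Δ x (k + 1) -
        ((k : ℝ) + 2) * ((k : ℝ) + 1) * ((N : ℝ) - ((k : ℝ) + 2) + 1) * x *
          constraintP N ε Δ x k

/-- The companion constraint polynomials `P̃^{(N,ε)}_k(x)`, i.e. the same recursion with
`ε` replaced by `−ε`. -/
noncomputable def constraintPt (N : ℕ) (ε Δ x : ℝ) : ℕ → ℝ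
  | 0 => 1
  | 1 => x + Δ ^ 2 - 1 + 2 * ε
  | (k + 2) =>
      (((k : ℝ) + 2) * x + Δ ^ 2 - ((k : ℝ) + 2) ^ 2 + 2 * ((k : ℝ) + 2) * ε) *
          constraintPt N ε Δ x (k + 1) -
        ((k : ℝ) + 2) * ((k : ℝ) + 1) * ((N : ℝ) - ((k : ℝ) + 2) + 1) * x *
          constraintPt N ε Δ x k


lemma constraintP_step (N : ℕ) (ε Δ x : ℝ) (k : ℕ) :
    constraintP N ε Δ x (k + 2) =
      (((k : ℝ) + 2) * x + Δ ^ 2 - ((k : ℝ) + 2) ^ 2 - 2 * ((k : ℝ) + 2) * ε) *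
          constraintP N ε Δ x (k + 1) -
        ((k : ℝ) + 2) * ((k : ℝ) + 1) * ((N : ℝ) - ((k : ℝ) + 2) + 1) * x *
          constraintP N ε Δ x k := rfl

lemma constraintPt_step (N : ℕ) (ε Δ x : ℝ) (k : ℕ) :
    constraintPt N ε Δ x (k + 2) =
      (((k : ℝ) + 2) * x + Δ ^ 2 - ((k : ℝ) + 2) ^ 2 + 2 * ((k : ℝ) + 2) * ε) *
          constraintPt N ε Δ x (k + 1) -
        ((k : ℝ) + 2) * ((k : ℝ) + 1) * ((N : ℝ) - ((k : ℝ) + 2) + 1) * x *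
          constraintPt N ε Δ x k := rfl

lemma constraintPt_key (N : ℕ) (x Δ : ℝ) : ∀ j : ℕ,
    constraintPt (N + 1) (1 / 2) Δ x (j + 2) =
      (((j : ℝ) + 2) * x + Δ ^ 2) * constraintP N (1 / 2) Δ x (j + 1) -
        ((j : ℝ) + 2) * ((j : ℝ) + 1) * ((N : ℝ) - ((j : ℝ) + 1)) * x *
          constraintP N (1 / 2) Δ x j := by
  intro j
  induction j using Nat.strong_induction_on with
  | _ j ih =>
    match j with
    | 0 =>
      show constraintPt (N + 1) (1/2) Δ x (0 + 2) = _
      rw [constraintPt_step]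
      simp only [constraintPt, constraintP]
      push_cast
      ring
    | 1 =>
      show constraintPt (N + 1) (1/2) Δ x (1 + 2) = _
      rw [constraintPt_step, constraintPt_step]
      simp only [constraintPt, constraintP, constraintP_step]
      push_cast
      ring
    | (m + 2) =>
      have h1 := ih m (by omega)
      have h2 := ih (m + 1) (by omega)
      show constraintPt (N + 1) (1/2) Δ x ((m + 2) + 2) = _
      rw [constraintPt_step]
      rw [show (m + 2) + 1 = (m + 1) + 2 from rfl] at *
      rw [h2, h1]
      rw [constraintP_step N (1/2) Δ x (m + 1)]
      rw [show m + 1 + 1 = m + 2 from rfl] at *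
      rw [constraintP_step N (1/2) Δ x m]
      push_cast
      ring

/-- Factorization: `P̃^{(N+1,1/2)}_{N+1}(x) = ((N+1)x + Δ²)·P^{(N,1/2)}_N(x)`. -/
theorem constraintPt_factorization (N : ℕ) (x Δ : ℝ) :
    constraintPt (N + 1) (1 / 2) Δ x (N + 1) =
      (((N : ℝ) + 1) * x + Δ ^ 2) * constraintP N (1 / 2) Δ x N := by
  match N with
  | 0 =>
    simp only [constraintPt, constraintP]
    norm_num
  | (m + 1) =>
    have h := constraintPt_key (m + 1) x Δ m
    rw [show (m + 1) + 1 = m + 2 from rfl] at *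
    rw [h]
    push_cast
    ring
end

section
/- For every N ∈ ℕ, every k with 0 ≤ k ≤ N, and all real x, Δ, ε, the determinant of the tridiagonal matrix M̃^{(N,ε)}_k(x,Δ) equals (−1)^{k+1}·Δ²·P̃^{(N,ε)}_k(x). -/
/-- The `(k+1)×(k+1)` tridiagonal matrix `M̃^{(N,ε)}_k(x,Δ)`: diagonal entries
`i² − i·x − 2εi − Δ²`, superdiagonal entries `M̃[i][i+1] = i·x` (so the `(0,1)` entry is `0`),
subdiagonal entries `M̃[i+1][i] = (i+1)·(N−i)`, all other entries `0`. -/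
noncomputable def tridiagMt (N k : ℕ) (ε Δ x : ℝ) : Matrix (Fin (k + 1)) (Fin (k + 1)) ℝ :=
  Matrix.of fun i j =>
    if (i : ℕ) = (j : ℕ) then (i : ℝ) ^ 2 - (i : ℝ) * x - 2 * ε * (i : ℝ) - Δ ^ 2
    else if (j : ℕ) = (i : ℕ) + 1 then (i : ℝ) * x
    else if (i : ℕ) = (j : ℕ) + 1 then ((j : ℝ) + 1) * ((N : ℝ) - (j : ℝ))
    else 0

noncomputable def triF (a b c : ℕ → ℝ) (i j : ℕ) : ℝ :=
  if i = j then a i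
  else if j = i + 1 then b i
  else if i = j + 1 then c j
  else 0

noncomputable def tri (a b c : ℕ → ℝ) (n : ℕ) : Matrix (Fin (n + 1)) (Fin (n + 1)) ℝ :=
  Matrix.of fun i j => triF a b c (i : ℕ) (j : ℕ)

noncomputable def dcont (a b c : ℕ → ℝ) : ℕ → ℝ
  | 0 => a 0
  | 1 => a 1 * a 0 - b 0 * c 0
  | (n + 2) => a (n + 2) * dcont a b c (n + 1) - b (n + 1) * c (n + 1) * dcont a b c n

lemma coe_succAbove (n : ℕ) (p : Fin (n+1)) (q : Fin n) :
    ((p.succAbove q : Fin (n+1)) : ℕ) = if (q : ℕ) < (p : ℕ) then (q : ℕ) else (q : ℕ) + 1 := by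
  rw [Fin.succAbove]
  split_ifs with h1 h2 h2
  · simp
  · exact absurd (by simpa [Fin.lt_def] using h1) h2
  · exact absurd (Fin.lt_def.mpr (by simpa using h2)) h1
  · simp

lemma tri_det (a b c : ℕ → ℝ) (n : ℕ) : (tri a b c n).det = dcont a b c n := by
  suffices h : ∀ m, (tri a b c m).det = dcont a b c m ∧
      (tri a b c (m+1)).det = dcont a b c (m+1) from (h n).1
  intro m
  induction m with
  | zero =>
    constructor
    · have h1 : (tri a b c 0).det = tri a b c 0 0 0 := Matrix.det_fin_one _
      rw [h1]; simp [tri, triF, dcont]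
    · have h2 : (tri a b c 1).det = _ := Matrix.det_fin_two _
      rw [h2]; simp [tri, triF, dcont]; ring
  | succ m ih =>
    refine ⟨ih.2, ?_⟩
    set M := tri a b c (m + 2) with hM
    rw [Matrix.det_succ_row M (Fin.last (m + 2))]
    rw [Fin.sum_univ_castSucc, Fin.sum_univ_castSucc]
    have hzero : ∀ j : Fin (m + 1),
        (-1 : ℝ) ^ (((Fin.last (m+2)) : ℕ) + ((j.castSucc.castSucc : Fin (m+3)) : ℕ)) *
          M (Fin.last (m+2)) j.castSucc.castSucc *
          ((M.submatrix (Fin.last (m+2)).succAbove j.castSucc.castSucc.succAbove).det) = 0 := by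
      intro j
      have hj : (j : ℕ) ≤ m := Nat.lt_succ_iff.mp j.isLt
      have : M (Fin.last (m+2)) j.castSucc.castSucc = 0 := by
        simp only [hM, tri, Matrix.of_apply, triF, Fin.coe_castSucc, Fin.val_last]
        split_ifs <;> first | rfl | (exfalso; omega)
      rw [this]; ring
    rw [Finset.sum_eq_zero (fun j _ => hzero j), zero_add]
    -- identify the (j = last) submatrix with tri (m+1)
    have e2 : M.submatrix (Fin.last (m+2)).succAbove (Fin.last (m+2)).succAbove
        = tri a b c (m+1) := by
      ext i j
      simp [hM, tri, Fin.succAbove_last, Matrix.submatrix_apply]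
    -- determinant of the (j = m+1) submatrix
    have e1 : (M.submatrix (Fin.last (m+2)).succAbove
        ((Fin.last (m+1)).castSucc).succAbove).det = b (m+1) * dcont a b c m := by
      set S : Matrix (Fin (m+2)) (Fin (m+2)) ℝ :=
        M.submatrix (Fin.last (m+2)).succAbove ((Fin.last (m+1)).castSucc).succAbove with hS
      have hcol : ∀ i : Fin (m+2), S i (Fin.last (m+1)) =
          triF a b c (i : ℕ) (m+2) := by
        intro i
        have hr : (((Fin.last (m+2)).succAbove i : Fin (m+3)) : ℕ) = (i : ℕ) := by
          rw [Fin.succAbove_last]; simp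
        have hc : ((((Fin.last (m+1)).castSucc).succAbove (Fin.last (m+1)) : Fin (m+3)) : ℕ)
            = m + 2 := by
          rw [coe_succAbove]; simp
        simp only [hS, Matrix.submatrix_apply, hM, tri, Matrix.of_apply]
        rw [hr, hc]
      rw [Matrix.det_succ_column S (Fin.last (m+1))]
      rw [Fin.sum_univ_castSucc]
      have hz2 : ∀ i : Fin (m+1),
          (-1 : ℝ) ^ (((i.castSucc : Fin (m+2)) : ℕ) + ((Fin.last (m+1)) : ℕ)) *
            S i.castSucc (Fin.last (m+1)) *
            ((S.submatrix i.castSucc.succAbove (Fin.last (m+1)).succAbove).det) = 0 := by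
        intro i
        have hi : (i : ℕ) ≤ m := Nat.lt_succ_iff.mp i.isLt
        have : S i.castSucc (Fin.last (m+1)) = 0 := by
          rw [hcol]
          simp only [triF, Fin.coe_castSucc]
          split_ifs <;> first | rfl | (exfalso; omega)
        rw [this]; ring
      rw [Finset.sum_eq_zero (fun i _ => hz2 i), zero_add]
      have hv : S (Fin.last (m+1)) (Fin.last (m+1)) = b (m+1) := by
        rw [hcol]
        simp only [triF, Fin.val_last]
        split_ifs <;> first | rfl | (exfalso; omega)
      have hsub : S.submatrix (Fin.last (m+1)).succAbove (Fin.last (m+1)).succAbove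
          = tri a b c m := by
        ext i j
        have hj : (j : ℕ) ≤ m := Nat.lt_succ_iff.mp j.isLt
        have hr : (((Fin.last (m+2)).succAbove ((Fin.last (m+1)).succAbove i) : Fin (m+3)) : ℕ)
            = (i : ℕ) := by
          rw [Fin.succAbove_last, Fin.succAbove_last]; simp
        have hc : ((((Fin.last (m+1)).castSucc).succAbove ((Fin.last (m+1)).succAbove j)
            : Fin (m+3)) : ℕ) = (j : ℕ) := by
          rw [Fin.succAbove_last, coe_succAbove]
          simp [Nat.lt_succ_iff.mpr hj]
        simp only [hS, Matrix.submatrix_apply, hM, tri, Matrix.of_apply]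
        rw [hr, hc]
      have hsign : (-1 : ℝ) ^ (((Fin.last (m+1)) : ℕ) + ((Fin.last (m+1)) : ℕ)) = 1 :=
        Even.neg_one_pow ⟨m+1, by simp⟩
      rw [hv, hsub, ih.1, hsign]
      ring
    have hv1 : M (Fin.last (m+2)) ((Fin.last (m+1)).castSucc) = c (m+1) := by
      simp only [hM, tri, Matrix.of_apply, triF, Fin.coe_castSucc, Fin.val_last]
      split_ifs <;> first | rfl | (exfalso; omega)
    have hv2 : M (Fin.last (m+2)) (Fin.last (m+2)) = a (m+2) := by
      simp only [hM, tri, Matrix.of_apply, triF, Fin.val_last]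
      split_ifs <;> first | rfl | (exfalso; omega)
    have hs1 : (-1 : ℝ) ^ (((Fin.last (m+2)) : ℕ) + (((Fin.last (m+1)).castSucc : Fin (m+3)) : ℕ)) = -1 :=
      Odd.neg_one_pow ⟨m+1, by simp; ring⟩
    have hs2 : (-1 : ℝ) ^ (((Fin.last (m+2)) : ℕ) + ((Fin.last (m+2)) : ℕ)) = 1 :=
      Even.neg_one_pow ⟨m+2, by simp⟩
    rw [e1, e2, ih.2, hv1, hv2, hs1, hs2]
    show _ = dcont a b c (m+2)
    simp only [dcont]
    ring

/-- `det M̃^{(N,ε)}_k(x,Δ) = (−1)^{k+1}·Δ²·P̃^{(N,ε)}_k(x)` for `0 ≤ k ≤ N`. -/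
theorem det_tridiagMt (N k : ℕ) (hk : k ≤ N) (x Δ ε : ℝ) :
    (tridiagMt N k ε Δ x).det = (-1) ^ (k + 1) * Δ ^ 2 * constraintPt N ε Δ x k := by
  set a : ℕ → ℝ := fun i => (i : ℝ) ^ 2 - (i : ℝ) * x - 2 * ε * (i : ℝ) - Δ ^ 2 with ha
  set b : ℕ → ℝ := fun i => (i : ℝ) * x with hb
  set c : ℕ → ℝ := fun j => ((j : ℝ) + 1) * ((N : ℝ) - (j : ℝ)) with hc
  have hMeq : tridiagMt N k ε Δ x = tri a b c k := rfl
  rw [hMeq, tri_det]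
  suffices h : ∀ m, dcont a b c m = (-1) ^ (m + 1) * Δ ^ 2 * constraintPt N ε Δ x m ∧
      dcont a b c (m+1) = (-1) ^ (m + 2) * Δ ^ 2 * constraintPt N ε Δ x (m+1) from (h k).1
  intro m
  induction m with
  | zero =>
    constructor
    · simp [dcont, constraintPt, ha]
    · simp only [dcont, constraintPt, ha, hb, hc]
      push_cast
      ring
  | succ m ih =>
    refine ⟨ih.2, ?_⟩
    show dcont a b c (m+2) = _
    simp only [dcont, constraintPt, ha, hb, hc]
    rw [ih.1, ih.2]
    push_cast
    ring
end

section
/- Let N ≥ 1 be a natural number, ε and Δ real numbers, and let x > 0 be a real root of the companion constraint polynomial, i.e. P̃^{(N,ε)}_N(x) = 0. Then the (N+1)×(N+1) real tridiagonal matrix M̃^{(N,ε)}_N(x,Δ) has rank exactly N. -/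
lemma val_succAbove {n : ℕ} (p : Fin (n + 1)) (i : Fin n) :
    ((p.succAbove i : Fin (n + 1)) : ℕ) = if (i : ℕ) < (p : ℕ) then (i : ℕ) else (i : ℕ) + 1 := by
  rw [Fin.succAbove]
  split_ifs with h1 h2 h3
  · simp
  · exact absurd (by simpa [Fin.lt_def] using h1) h2
  · exact absurd (by simpa [Fin.lt_def] using h3) h1
  · simp

lemma tridiag_entry {N k : ℕ} {ε Δ x : ℝ} (i j : Fin (k+1)) (a b : ℕ)
    (ha : (i : ℕ) = a) (hb : (j : ℕ) = b) :
    tridiagMt N k ε Δ x i j =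
      if a = b then (a : ℝ) ^ 2 - (a : ℝ) * x - 2 * ε * (a : ℝ) - Δ ^ 2
      else if b = a + 1 then (a : ℝ) * x
      else if a = b + 1 then ((b : ℝ) + 1) * ((N : ℝ) - (b : ℝ))
      else 0 := by
  subst ha hb; simp [tridiagMt]

lemma tridiag_castSucc (N k : ℕ) (ε Δ x : ℝ) :
    (tridiagMt N (k+1) ε Δ x).submatrix Fin.castSucc Fin.castSucc = tridiagMt N k ε Δ x := by
  ext i j
  simp only [Matrix.submatrix_apply]
  exact tridiag_entry _ _ i j rfl rfl |>.symm ▸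
    (tridiag_entry (Fin.castSucc i) (Fin.castSucc j) (i : ℕ) (j : ℕ) rfl rfl).trans
    (tridiag_entry i j (i : ℕ) (j : ℕ) rfl rfl).symm

lemma det_step (N k : ℕ) (ε Δ x : ℝ) :
    (tridiagMt N (k+2) ε Δ x).det =
      (((k:ℝ)+2)^2 - ((k:ℝ)+2)*x - 2*ε*((k:ℝ)+2) - Δ^2) * (tridiagMt N (k+1) ε Δ x).det
      - ((k:ℝ)+2)*((k:ℝ)+1)*((N:ℝ)-(k:ℝ)-1)*x * (tridiagMt N k ε Δ x).det := by
  set A := tridiagMt N (k+2) ε Δ x with hA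
  rw [Matrix.det_succ_row A (Fin.last (k+2))]
  rw [Fin.sum_univ_castSucc, Fin.sum_univ_castSucc]
  have hzero : ∀ j : Fin (k+1),
      A (Fin.last (k+2)) (Fin.castSucc (Fin.castSucc j)) = 0 := by
    intro j
    rw [hA, tridiag_entry _ _ (k+2) (j : ℕ) (by simp) (by simp)]
    have := j.is_lt
    split_ifs with h1 h2 h3 <;> first | omega | rfl
  rw [Finset.sum_eq_zero (fun j _ => by rw [hzero j]; ring)]
  have hsA : (Fin.last (k+2)).succAbove = Fin.castSucc := Fin.succAbove_last
  set j₁ : Fin (k+3) := Fin.castSucc (Fin.last (k+1)) with hj₁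
  have hj₁v : (j₁ : ℕ) = k+1 := by simp [hj₁]
  -- the easy minor
  have hminor1 : A.submatrix (Fin.last (k+2)).succAbove (Fin.last (k+2)).succAbove
      = tridiagMt N (k+1) ε Δ x := by
    rw [hsA, hA]; exact tridiag_castSucc N (k+1) ε Δ x
  -- the entry at (last, last)
  have he1 : A (Fin.last (k+2)) (Fin.last (k+2))
      = ((k+2:ℕ):ℝ)^2 - ((k+2:ℕ):ℝ)*x - 2*ε*((k+2:ℕ):ℝ) - Δ^2 := by
    rw [hA, tridiag_entry _ _ (k+2) (k+2) (by simp) (by simp)]; simp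
  -- the entry at (last, j₁)
  have he2 : A (Fin.last (k+2)) j₁ = (((k+1:ℕ):ℝ)+1) * ((N:ℝ) - ((k+1:ℕ):ℝ)) := by
    rw [hA, tridiag_entry _ _ (k+2) (k+1) (by simp) hj₁v]
    split_ifs with h1 h2 h3 <;> first | omega | rfl
  -- the hard minor
  have hdetB : (A.submatrix (Fin.last (k+2)).succAbove j₁.succAbove).det
      = (((k:ℕ):ℝ)+1) * x * (tridiagMt N k ε Δ x).det := by
    set B := A.submatrix (Fin.last (k+2)).succAbove j₁.succAbove with hBdef
    rw [Matrix.det_succ_column B (Fin.last (k+1))]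
    rw [Fin.sum_univ_castSucc]
    have hz2 : ∀ i : Fin (k+1), B (Fin.castSucc i) (Fin.last (k+1)) = 0 := by
      intro i
      have hcol : ((j₁.succAbove (Fin.last (k+1)) : Fin (k+3)) : ℕ) = k+2 := by
        rw [val_succAbove]; simp [hj₁v]
      have hrow : (((Fin.last (k+2)).succAbove (Fin.castSucc i)) : ℕ) = (i:ℕ) := by
        rw [hsA]; simp
      rw [hBdef, Matrix.submatrix_apply, hA, tridiag_entry _ _ (i:ℕ) (k+2) hrow hcol]
      have := i.is_lt
      split_ifs with h1 h2 h3 <;> first | omega | rfl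
    rw [Finset.sum_eq_zero (fun i _ => by rw [hz2 i]; ring)]
    have hBe : B (Fin.last (k+1)) (Fin.last (k+1)) = ((k+1:ℕ):ℝ) * x := by
      rw [hBdef, Matrix.submatrix_apply, hA,
        tridiag_entry _ _ (k+1) (k+2) (by rw [hsA]; simp) (by rw [val_succAbove]; simp [hj₁v])]
      split_ifs with h1 h2 h3 <;> first | omega | rfl
    have hBm : B.submatrix (Fin.last (k+1)).succAbove (Fin.last (k+1)).succAbove
        = tridiagMt N k ε Δ x := by
      ext i j
      rw [Fin.succAbove_last, hBdef]
      simp only [Matrix.submatrix_apply]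
      have hrow : (((Fin.last (k+2)).succAbove (Fin.castSucc i)) : ℕ) = (i:ℕ) := by
        rw [hsA]; simp
      have hcol : ((j₁.succAbove (Fin.castSucc j) : Fin (k+3)) : ℕ) = (j:ℕ) := by
        rw [val_succAbove]
        simp [hj₁v]
        exact Nat.le_of_lt_succ j.is_lt
      rw [hA, tridiag_entry _ _ (i:ℕ) (j:ℕ) hrow hcol,
        tridiag_entry i j (i:ℕ) (j:ℕ) rfl rfl]
    rw [hBe, hBm]
    have hs : ((-1:ℝ))^((Fin.last (k+1) : ℕ) + (Fin.last (k+1) : ℕ)) = 1 :=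
      Even.neg_one_pow ⟨(Fin.last (k+1) : ℕ), by ring⟩
    rw [hs]
    push_cast; ring
  rw [hdetB, hminor1, he1, he2]
  have hs1 : ((-1:ℝ))^((Fin.last (k+2) : ℕ) + (j₁ : ℕ)) = -1 := by
    rw [hj₁v, Fin.val_last]; exact Odd.neg_one_pow ⟨k+1, by ring⟩
  have hs2 : ((-1:ℝ))^((Fin.last (k+2) : ℕ) + (Fin.last (k+2) : ℕ)) = 1 := by
    rw [Fin.val_last]; exact Even.neg_one_pow ⟨k+2, by ring⟩
  rw [hs1, hs2]
  push_cast; ring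

lemma det_tridiag (N : ℕ) (ε Δ x : ℝ) (k : ℕ) :
    (tridiagMt N k ε Δ x).det = (-1)^(k+1) * Δ^2 * constraintPt N ε Δ x k := by
  induction k using Nat.strong_induction_on with
  | _ k ih =>
    match k with
    | 0 =>
      rw [Matrix.det_fin_one]
      rw [tridiag_entry (0 : Fin 1) (0 : Fin 1) 0 0 rfl rfl]
      simp [constraintPt]
    | 1 =>
      rw [Matrix.det_fin_two]
      rw [tridiag_entry (0 : Fin 2) (0 : Fin 2) 0 0 rfl rfl,
        tridiag_entry (0 : Fin 2) (1 : Fin 2) 0 1 rfl rfl,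
        tridiag_entry (1 : Fin 2) (0 : Fin 2) 1 0 rfl rfl,
        tridiag_entry (1 : Fin 2) (1 : Fin 2) 1 1 rfl rfl]
      simp [constraintPt]
      ring
    | (k+2) =>
      rw [det_step, ih (k+1) (by omega), ih k (by omega)]
      show _ = _ * _ * ((((k : ℝ) + 2) * x + Δ ^ 2 - ((k : ℝ) + 2) ^ 2 + 2 * ((k : ℝ) + 2) * ε) *
          constraintPt N ε Δ x (k + 1) -
        ((k : ℝ) + 2) * ((k : ℝ) + 1) * ((N : ℝ) - ((k : ℝ) + 2) + 1) * x *
          constraintPt N ε Δ x k)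
      push_cast
      simp only [pow_succ, pow_zero]
      ring

lemma rank_submatrix_le' {m' n' : Type*} [Fintype m'] [Fintype n'] [DecidableEq m']
    (A : Matrix m' m' ℝ) (f g : n' → m') : (A.submatrix f g).rank ≤ A.rank := by
  have h : A.submatrix f g =
      ((1 : Matrix m' m' ℝ).submatrix f (Equiv.refl m')) *
        (A * (1 : Matrix m' m' ℝ).submatrix (Equiv.refl m') g) := by
    rw [Matrix.mul_submatrix_one, Matrix.one_submatrix_mul]
    simp
  rw [h]
  exact le_trans (Matrix.rank_mul_le_right _ _) (Matrix.rank_mul_le_left _ _)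


/-- If `x > 0` is a root of `P̃^{(N,ε)}_N`, then `M̃^{(N,ε)}_N(x,Δ)` has rank exactly `N`. -/
theorem rank_tridiagMt (N : ℕ) (hN : 1 ≤ N) (ε Δ : ℝ) (x : ℝ) (hx : 0 < x)
    (hroot : constraintPt N ε Δ x N = 0) :
    (tridiagMt N N ε Δ x).rank = N := by
  set A := tridiagMt N N ε Δ x with hA
  have hdet0 : A.det = 0 := by rw [hA, det_tridiag, hroot]; ring
  have hub : A.rank ≤ N := by
    obtain ⟨v, hv, hAv⟩ := (Matrix.exists_mulVec_eq_zero_iff).mpr hdet0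
    have hker : v ∈ LinearMap.ker A.mulVecLin := by
      rw [LinearMap.mem_ker, Matrix.mulVecLin_apply, hAv]
    have h1 : 0 < Module.finrank ℝ (LinearMap.ker A.mulVecLin) :=
      Module.finrank_pos_iff.mpr ⟨⟨⟨v, hker⟩, 0, by simp [Subtype.ext_iff, hv]⟩⟩
    have h2 := LinearMap.finrank_range_add_finrank_ker A.mulVecLin
    rw [Module.finrank_fintype_fun_eq_card] at h2
    have h3 : A.rank = Module.finrank ℝ (LinearMap.range A.mulVecLin) := rfl
    simp [Fintype.card_fin] at h2
    omega
  have hlb : N ≤ A.rank := by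
    set B := A.submatrix (fun i : Fin N => i.succ) (fun j : Fin N => Fin.castSucc j) with hB
    have hBt : B.BlockTriangular id := by
      intro i j hij
      have hij' : (j : ℕ) < (i : ℕ) := hij
      rw [hB, Matrix.submatrix_apply, hA,
        tridiag_entry _ _ ((i:ℕ)+1) (j:ℕ) (by simp) (by simp)]
      split_ifs <;> first | omega | rfl
    have hdiag : ∀ i : Fin N, B i i ≠ 0 := by
      intro i
      rw [hB, Matrix.submatrix_apply, hA,
        tridiag_entry _ _ ((i:ℕ)+1) (i:ℕ) (by simp) (by simp)]
      have h1 : ¬((i:ℕ)+1 = (i:ℕ)) := by omega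
      have h2 : ¬((i:ℕ) = (i:ℕ)+1+1) := by omega
      have h3 : ((i:ℕ)+1 = (i:ℕ)+1) := rfl
      rw [if_neg h1, if_neg h2, if_pos h3]
      have hNi : (i : ℝ) < (N : ℝ) := by exact_mod_cast i.is_lt
      have : (0:ℝ) < ((i:ℝ)+1) * ((N:ℝ) - (i:ℝ)) := by
        apply mul_pos <;> [positivity; linarith]
      exact ne_of_gt this
    have hdetB : B.det ≠ 0 := by
      rw [Matrix.det_of_upperTriangular hBt]
      exact Finset.prod_ne_zero_iff.mpr fun i _ => hdiag i
    have hrB : B.rank = N := by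
      have := Matrix.rank_of_isUnit B
        ((Matrix.isUnit_iff_isUnit_det B).mpr (isUnit_iff_ne_zero.mpr hdetB))
      simpa using this
    calc N = B.rank := hrB.symm
      _ ≤ A.rank := rank_submatrix_le' A _ _
  omega
end
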